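/- Let R be a commutative ring and let A be a twisted commutative algebra in ℤ-graded R-modules, with A^i(n) denoting the degree-i component of its arity-n part. Suppose A has a generating set {a_0, a_1, a_2, …} (i.e., the smallest sub-tca containing these homogeneous elements is A itself) such that a_0 ∈ A^0(1), deg(a_i) < 0 for all i ≥ 1, and lim_{i → ∞} deg(a_i) = −∞ (equivalently, for every integer N only finitely many generators have degree ≥ N). Then for each i ∈ ℤ, the FI-module n ↦ A^i(n), with structure maps given by multiplication by a_0, is finitely generated; indeed it is generated by the finitely many monomials of degree i in the generators a_1, a_2, …. -/

import Mathlib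

/-- Transport an element of `A m i` along equalities of the indices. -/
def gcast {A : ℕ → ℤ → Type*} {m n : ℕ} {i j : ℤ} (h : m = n) (h' : i = j)
    (a : A m i) : A n j :=
  _root_.cast (by rw [h, h']) a

/-- The "block sum" permutation `π ⊕ τ` of `Fin (m + n)`, acting as `π` on the first `m`
elements and as `τ` on the last `n` elements. -/
def blockSum {m n : ℕ} (π : Equiv.Perm (Fin m)) (τ : Equiv.Perm (Fin n)) :
    Equiv.Perm (Fin (m + n)) :=
  (finSumFinEquiv.symm.trans (π.sumCongr τ)).trans finSumFinEquiv

/-- The "block transposition" of `Fin (m + n)` interchanging the first block of `m`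
elements with the last block of `n` elements. -/
def blockSwap (m n : ℕ) : Equiv.Perm (Fin (m + n)) :=
  (finAddFlip : Fin (m + n) ≃ Fin (n + m)).trans (finCongr (Nat.add_comm n m))

/-- A twisted commutative algebra in `ℤ`-graded `R`-modules (presented on the skeleton of
the category of finite sets and bijections): a sequence of `ℤ`-graded symmetric-group
representations `A(n) = ⊕_i A^i(n)` together with a unit and `S_m × S_n`-equivariant
multiplication maps `A^i(m) ⊗ A^j(n) → A^{i+j}(m+n)`, commutative up to the Koszul sign
`(-1)^{ij}` and the block transposition, and associative. -/
structure GradedTCA (R : Type*) [CommRing R] (A : ℕ → ℤ → Type*)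
    [∀ n i, AddCommGroup (A n i)] [∀ n i, Module R (A n i)] where
  /-- the unit element `1 ∈ A^0(0)` -/
  one : A 0 0
  /-- the action of the symmetric group `S_n` on `A^i(n)` -/
  ρ : ∀ (n : ℕ) (i : ℤ), Equiv.Perm (Fin n) →* (A n i ≃ₗ[R] A n i)
  /-- the multiplication maps -/
  mul : ∀ (m n : ℕ) (i j : ℤ), A m i →ₗ[R] A n j →ₗ[R] A (m + n) (i + j)
  one_mul : ∀ (n : ℕ) (i : ℤ) (a : A n i),
    mul 0 n 0 i one a = gcast (Nat.zero_add n).symm (zero_add i).symm a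
  mul_assoc : ∀ (m n k : ℕ) (i j l : ℤ) (a : A m i) (b : A n j) (c : A k l),
    mul (m + n) k (i + j) l (mul m n i j a b) c =
      gcast (Nat.add_assoc m n k).symm (add_assoc i j l).symm
        (mul m (n + k) i (j + l) a (mul n k j l b c))
  mul_comm : ∀ (m n : ℕ) (i j : ℤ) (a : A m i) (b : A n j),
    mul m n i j a b =
      ((Int.negOnePow (i * j) : ℤˣ) : ℤ) •
        ρ (m + n) (i + j) (blockSwap m n)
          (gcast (Nat.add_comm n m) (add_comm j i) (mul n m j i b a))
  mul_equivariant : ∀ (m n : ℕ) (i j : ℤ) (π : Equiv.Perm (Fin m))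
      (τ : Equiv.Perm (Fin n)) (a : A m i) (b : A n j),
    mul m n i j (ρ m i π a) (ρ n j τ b) = ρ (m + n) (i + j) (blockSum π τ) (mul m n i j a b)

/-- A family of submodules `W n i ≤ A^i(n)` is a sub-tca if it contains the unit and is
closed under the symmetric group actions and the multiplication. -/
structure IsSubTCA {R : Type*} [CommRing R] {A : ℕ → ℤ → Type*}
    [∀ n i, AddCommGroup (A n i)] [∀ n i, Module R (A n i)] (T : GradedTCA R A)
    (W : ∀ n i, Submodule R (A n i)) : Prop where
  one_mem : T.one ∈ W 0 0
  perm_mem : ∀ (n : ℕ) (i : ℤ) (π : Equiv.Perm (Fin n)) (a : A n i),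
    a ∈ W n i → T.ρ n i π a ∈ W n i
  mul_mem : ∀ (m n : ℕ) (i j : ℤ) (a : A m i) (b : A n j),
    a ∈ W m i → b ∈ W n j → T.mul m n i j a b ∈ W (m + n) (i + j)

namespace TCAaux
set_option linter.unusedSectionVars false

variable {R : Type*} [CommRing R] {A : ℕ → ℤ → Type*}
    [∀ n i, AddCommGroup (A n i)] [∀ n i, Module R (A n i)]

theorem gcast_rfl {m : ℕ} {i : ℤ} (h : m = m) (h' : i = i) (a : A m i) :
    gcast (A := A) h h' a = a := rfl

theorem gcast_gcast {m n p : ℕ} {i j l : ℤ} (h1 : m = n) (h1' : i = j) (h2 : n = p)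
    (h2' : j = l) (a : A m i) :
    gcast (A := A) h2 h2' (gcast h1 h1' a) = gcast (h1.trans h2) (h1'.trans h2') a := by
  subst h1; subst h1'; rfl

/-- `gcast` as a linear equivalence. -/
def gcastEquiv (h : m = n) (h' : (i : ℤ) = j) : A m i ≃ₗ[R] A n j := by
  subst h; subst h'; exact LinearEquiv.refl R _

@[simp] theorem gcastEquiv_apply (h : m = n) (h' : (i : ℤ) = j) (a : A m i) :
    gcastEquiv (R := R) (A := A) h h' a = gcast h h' a := by
  subst h; subst h'; rfl

variable (T : GradedTCA R A)

theorem perm_one_apply (n : ℕ) (i : ℤ) (a : A n i) : T.ρ n i 1 a = a := by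
  rw [map_one]; rfl

theorem perm_mul_apply (n : ℕ) (i : ℤ) (π τ : Equiv.Perm (Fin n)) (a : A n i) :
    T.ρ n i π (T.ρ n i τ a) = T.ρ n i (π * τ) a := by
  rw [map_mul]; rfl

theorem perm_gcast {m n : ℕ} {i j : ℤ} (h : m = n) (h' : i = j) (π : Equiv.Perm (Fin m))
    (a : A m i) :
    gcast h h' (T.ρ m i π a) =
      T.ρ n j ((finCongr h).permCongr π) (gcast h h' a) := by
  subst h; subst h'
  rw [gcast_rfl, gcast_rfl]
  congr 1

theorem perm_gcast' {m n : ℕ} {i j : ℤ} (h : m = n) (h' : i = j) (π : Equiv.Perm (Fin n))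
    (a : A m i) :
    T.ρ n j π (gcast h h' a) =
      gcast h h' (T.ρ m i ((finCongr h).permCongr.symm π) a) := by
  rw [perm_gcast]
  congr 1

theorem mul_gcast_left {m m' n : ℕ} {i i' j : ℤ} (h : m = m') (h' : i = i')
    (a : A m i) (b : A n j) :
    T.mul m' n i' j (gcast h h' a) b = gcast (by rw [h]) (by rw [h']) (T.mul m n i j a b) := by
  subst h; subst h'; rfl

theorem mul_gcast_right {m n n' : ℕ} {i j j' : ℤ} (h : n = n') (h' : j = j')
    (a : A m i) (b : A n j) :
    T.mul m n' i j' a (gcast h h' b) = gcast (by rw [h]) (by rw [h']) (T.mul m n i j a b) := by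
  subst h; subst h'; rfl

theorem mul_perm_left {m n : ℕ} {i j : ℤ} (π : Equiv.Perm (Fin m)) (a : A m i) (b : A n j) :
    T.mul m n i j (T.ρ m i π a) b = T.ρ (m + n) (i + j) (blockSum π 1) (T.mul m n i j a b) := by
  rw [← T.mul_equivariant m n i j π 1 a b, perm_one_apply]

theorem mul_perm_right {m n : ℕ} {i j : ℤ} (τ : Equiv.Perm (Fin n)) (a : A m i) (b : A n j) :
    T.mul m n i j a (T.ρ n j τ b) = T.ρ (m + n) (i + j) (blockSum 1 τ) (T.mul m n i j a b) := by
  rw [← T.mul_equivariant m n i j 1 τ a b, perm_one_apply]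

/-- multiplication by the unit on the right -/
theorem mul_one' (m : ℕ) (j : ℤ) (a : A m j) :
    T.mul m 0 j 0 a T.one =
      T.ρ (m + 0) (j + 0) (blockSwap m 0)
        (gcast (by omega) (by omega) a) := by
  have := T.mul_comm m 0 j 0 a T.one
  rw [T.one_mul, gcast_gcast] at this
  simpa [Int.negOnePow] using this


/-- commuting `a0` from the left to the right -/
theorem a0_mul_comm (a0 : A 1 0) {n : ℕ} {j : ℤ} (b : A n j) :
    T.mul 1 n 0 j a0 b =
      T.ρ (1 + n) (0 + j) (blockSwap 1 n)
        (gcast (Nat.add_comm n 1) (add_comm j 0) (T.mul n 1 j 0 b a0)) := by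
  have := T.mul_comm 1 n 0 j a0 b
  simpa [Int.negOnePow] using this

section Defs

variable (a0 : A 1 0) {κ : Type*} {ar : κ → ℕ} {deg : κ → ℤ} (g : ∀ k, A (ar k) (deg k))

/-- total arity of a list of generators -/
def arL : List κ → ℕ
  | [] => 0
  | k :: L => ar k + arL L

/-- total degree of a list of generators -/
def degL : List κ → ℤ
  | [] => 0
  | k :: L => deg k + degL L

/-- left-nested product of a list of generators -/
def rprod : (L : List κ) → A (arL (ar := ar) L) (degL (deg := deg) L)
  | [] => T.one
  | k :: L => T.mul _ _ _ _ (g k) (rprod L)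

/-- multiplication by `a0` on the right -/
def a0mul {m : ℕ} {j : ℤ} (x : A m j) : A (m + 1) j :=
  gcast rfl (add_zero j) (T.mul m 1 j 0 x a0)

/-- iterated multiplication by `a0` on the right -/
def a0pow : (r : ℕ) → {m : ℕ} → {j : ℤ} → A m j → A (m + r) j
  | 0, _, _, x => x
  | r + 1, _, _, x => a0mul T a0 (a0pow r x)

/-- the normal-form generators of the sub-tca generated by `a0` and the `g k` -/
def Gens (n : ℕ) (jj : ℤ) : Set (A n jj) :=
  { z | ∃ (L : List κ) (r : ℕ) (π : Equiv.Perm (Fin (arL (ar := ar) L + r)))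
      (h : arL (ar := ar) L + r = n) (h' : degL (deg := deg) L = jj),
      z = gcast h h' (T.ρ _ _ π (a0pow T a0 r (rprod T g L))) }

/-- the span of the normal-form generators -/
def V (n : ℕ) (jj : ℤ) : Submodule R (A n jj) :=
  Submodule.span R (Gens T a0 g n jj)

theorem mem_V_of (L : List κ) (r : ℕ) (π : Equiv.Perm (Fin (arL (ar := ar) L + r)))
    {n : ℕ} {jj : ℤ} (h : arL (ar := ar) L + r = n) (h' : degL (deg := deg) L = jj) :
    gcast h h' (T.ρ _ _ π (a0pow T a0 r (rprod T g L))) ∈ V T a0 g n jj :=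
  Submodule.subset_span ⟨L, r, π, h, h', rfl⟩

/-- membership transport along a linear map: span version -/
theorem V_map {m n : ℕ} {j j' : ℤ} (f : A m j →ₗ[R] A n j')
    (hf : ∀ z ∈ Gens T a0 g m j, f z ∈ V T a0 g n j')
    {x : A m j} (hx : x ∈ V T a0 g m j) : f x ∈ V T a0 g n j' := by
  have h2 : V T a0 g m j ≤ Submodule.comap f (V T a0 g n j') :=
    Submodule.span_le.mpr (fun z hz => hf z hz)
  exact h2 hx

theorem V_perm {n : ℕ} {jj : ℤ} (π : Equiv.Perm (Fin n)) {x : A n jj}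
    (hx : x ∈ V T a0 g n jj) : T.ρ n jj π x ∈ V T a0 g n jj := by
  refine V_map T a0 g (T.ρ n jj π).toLinearMap ?_ hx
  rintro z ⟨L, r, σ, h, h', rfl⟩
  show T.ρ n jj π (gcast h h' (T.ρ _ _ σ (a0pow T a0 r (rprod T g L)))) ∈ _
  rw [perm_gcast', perm_mul_apply]
  exact mem_V_of T a0 g L r _ h h'

theorem V_gcast {m n : ℕ} {j j' : ℤ} (h : m = n) (h' : j = j') {x : A m j}
    (hx : x ∈ V T a0 g m j) : gcast h h' x ∈ V T a0 g n j' := by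
  subst h; subst h'; rwa [gcast_rfl]


theorem perm_gcast_deg {m : ℕ} {i j : ℤ} (h' : i = j) (π : Equiv.Perm (Fin m)) (a : A m i) :
    gcast rfl h' (T.ρ m i π a) = T.ρ m j π (gcast rfl h' a) := by
  subst h'; rfl

theorem a0mul_gcast {m m' : ℕ} {j j' : ℤ} (h : m = m') (h' : j = j') (x : A m j) :
    a0mul T a0 (gcast h h' x) = gcast (by rw [h]) h' (a0mul T a0 x) := by
  subst h; subst h'; rfl

theorem a0mul_perm {m : ℕ} {j : ℤ} (π : Equiv.Perm (Fin m)) (x : A m j) :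
    a0mul T a0 (T.ρ m j π x) = T.ρ (m + 1) j (blockSum π 1) (a0mul T a0 x) := by
  show gcast rfl (add_zero j) (T.mul m 1 j 0 (T.ρ m j π x) a0) = _
  rw [mul_perm_left, perm_gcast_deg]
  rfl

theorem a0pow_gcast_deg (r : ℕ) {m : ℕ} {j j' : ℤ} (h' : j = j') (x : A m j) :
    a0pow T a0 r (gcast rfl h' x) = gcast rfl h' (a0pow T a0 r x) := by
  subst h'; rfl

theorem mul_a0mul_right {m n : ℕ} {j j' : ℤ} (x : A m j) (y : A n j') :
    T.mul m (n + 1) j j' x (a0mul T a0 y) = a0mul T a0 (T.mul m n j j' x y) := by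
  show T.mul m (n + 1) j j' x (gcast rfl (add_zero j') (T.mul n 1 j' 0 y a0)) =
    gcast rfl (add_zero (j + j')) (T.mul (m + n) 1 (j + j') 0 (T.mul m n j j' x y) a0)
  rw [mul_gcast_right, T.mul_assoc m n 1 j j' 0 x y a0, gcast_gcast]

theorem mul_a0pow_right (s : ℕ) {m n : ℕ} {j j' : ℤ} (x : A m j) (y : A n j') :
    T.mul m (n + s) j j' x (a0pow T a0 s y) =
      gcast (Nat.add_assoc m n s) rfl (a0pow T a0 s (T.mul m n j j' x y)) := by
  induction s with
  | zero => rfl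
  | succ s ih =>
    show T.mul m ((n + s) + 1) j j' x (a0mul T a0 (a0pow T a0 s y)) = _
    rw [mul_a0mul_right, ih, a0mul_gcast]
    rfl

theorem mem_V_plain (L : List κ) (r : ℕ) {n : ℕ} {jj : ℤ}
    (h : arL (ar := ar) L + r = n) (h' : degL (deg := deg) L = jj) :
    gcast h h' (a0pow T a0 r (rprod T g L)) ∈ V T a0 g n jj := by
  have := mem_V_of T a0 g L r 1 h h'
  rwa [perm_one_apply] at this

theorem V_a0mul {m : ℕ} {j : ℤ} {x : A m j} (hx : x ∈ V T a0 g m j) :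
    a0mul T a0 x ∈ V T a0 g (m + 1) j := by
  have h0 : ∀ y : A m j,
      ((gcastEquiv (R := R) (A := A) rfl (add_zero j)).toLinearMap ∘ₗ
        ((T.mul m 1 j 0).flip a0)) y = a0mul T a0 y := fun y => by
    simp only [LinearMap.comp_apply, LinearMap.flip_apply, LinearEquiv.coe_coe,
      gcastEquiv_apply]
    rfl
  have := V_map T a0 g
    ((gcastEquiv rfl (add_zero j)).toLinearMap ∘ₗ ((T.mul m 1 j 0).flip a0)) ?_ hx
  · rwa [h0] at this
  rintro z ⟨L, r, π, h, h', rfl⟩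
  rw [h0, a0mul_gcast, a0mul_perm]
  exact mem_V_of T a0 g L (r + 1) (blockSum (m := arL L + r) (n := 1) π 1) (by omega) h'

theorem V_a0mul_left {n : ℕ} {j : ℤ} {x : A n j} (hx : x ∈ V T a0 g n j) :
    T.mul 1 n 0 j a0 x ∈ V T a0 g (1 + n) (0 + j) := by
  rw [a0_mul_comm]
  apply V_perm
  apply V_gcast
  have : T.mul n 1 j 0 x a0 = gcast rfl (add_zero j).symm (a0mul T a0 x) := by
    rw [show a0mul T a0 x = gcast rfl (add_zero j) (T.mul n 1 j 0 x a0) from rfl, gcast_gcast]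
    exact (gcast_rfl _ _ _).symm
  rw [this]
  exact V_gcast T a0 g rfl _ (V_a0mul T a0 g hx)

theorem V_gmul (k : κ) {n : ℕ} {j : ℤ} {x : A n j} (hx : x ∈ V T a0 g n j) :
    T.mul (ar k) n (deg k) j (g k) x ∈ V T a0 g (ar k + n) (deg k + j) := by
  refine V_map T a0 g (T.mul (ar k) n (deg k) j (g k)) ?_ hx
  rintro z ⟨L, r, π, h, h', rfl⟩
  rw [mul_gcast_right, mul_perm_right, mul_a0pow_right]
  apply V_gcast
  apply V_perm
  apply V_gcast
  exact mem_V_plain T a0 g (k :: L) r rfl rfl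

theorem V_mul_gen (r : ℕ) (L : List κ) {n : ℕ} {j' : ℤ} (x : A n j')
    (hx : x ∈ V T a0 g n j') :
    T.mul (arL (ar := ar) L + r) n (degL (deg := deg) L) j' (a0pow T a0 r (rprod T g L)) x ∈
      V T a0 g ((arL (ar := ar) L + r) + n) (degL (deg := deg) L + j') := by
  induction r generalizing L n j' x with
  | zero =>
    induction L generalizing n j' x with
    | nil =>
      show T.mul 0 n 0 j' T.one x ∈ V T a0 g (0 + n) (0 + j')
      rw [T.one_mul]
      exact V_gcast T a0 g _ _ hx
    | cons k L ih =>
      show T.mul (ar k + arL (ar := ar) L) n (deg k + degL (deg := deg) L) j'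
        (T.mul _ _ _ _ (g k) (rprod T g L)) x ∈ _
      rw [T.mul_assoc]
      apply V_gcast
      exact V_gmul T a0 g k (ih x hx)
  | succ r ih =>
    show T.mul ((arL (ar := ar) L + r) + 1) n (degL (deg := deg) L) j'
      (gcast rfl (add_zero (degL (deg := deg) L))
        (T.mul (arL (ar := ar) L + r) 1 (degL (deg := deg) L) 0
          (a0pow T a0 r (rprod T g L)) a0)) x ∈ _
    rw [mul_gcast_left, T.mul_assoc]
    apply V_gcast
    apply V_gcast
    exact ih L _ (V_a0mul_left T a0 g hx)

theorem V_mul {m n : ℕ} {j j' : ℤ} {x : A m j} {y : A n j'}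
    (hx : x ∈ V T a0 g m j) (hy : y ∈ V T a0 g n j') :
    T.mul m n j j' x y ∈ V T a0 g (m + n) (j + j') := by
  refine V_map T a0 g ((T.mul m n j j').flip y) ?_ hx
  rintro z ⟨L, r, π, h, h', rfl⟩
  show T.mul m n j j' (gcast h h' (T.ρ _ _ π (a0pow T a0 r (rprod T g L)))) y ∈ _
  rw [mul_gcast_left, mul_perm_left]
  apply V_gcast
  apply V_perm
  exact V_mul_gen T a0 g r L y hy

theorem V_one_mem : T.one ∈ V T a0 g 0 0 :=
  mem_V_plain T a0 g [] 0 rfl rfl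

theorem V_a0_mem : a0 ∈ V T a0 g 1 0 := by
  have := mem_V_plain T a0 g [] 1 rfl rfl
  have h2 : a0pow T a0 1 (rprod T g ([] : List κ)) = gcast (Nat.zero_add 1).symm rfl a0 := by
    show gcast rfl (add_zero 0) (T.mul 0 1 0 0 T.one a0) = _
    rw [T.one_mul, gcast_gcast]
  rw [h2] at this
  exact this

theorem V_g_mem (k : κ) : g k ∈ V T a0 g (ar k) (deg k) := by
  have := mem_V_of T a0 g [k] 0 (blockSwap (ar k) 0)⁻¹ rfl (add_zero (deg k))
  have h2 : T.ρ (arL (ar := ar) [k] + 0) (degL (deg := deg) [k]) (blockSwap (ar k) 0)⁻¹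
      (a0pow T a0 0 (rprod T g [k])) = gcast rfl (add_zero (deg k)).symm (g k) := by
    show T.ρ (ar k + 0) (deg k + 0) (blockSwap (ar k) 0)⁻¹
      (T.mul (ar k) 0 (deg k) 0 (g k) T.one) = _
    rw [mul_one', perm_mul_apply, inv_mul_cancel, perm_one_apply]
  rw [h2] at this
  have this' : gcast (A := A) (rfl : ar k = ar k) (add_zero (deg k))
      (gcast rfl (add_zero (deg k)).symm (g k)) ∈ V T a0 g (ar k) (deg k) := this
  rwa [gcast_gcast, gcast_rfl] at this'

theorem V_isSubTCA : IsSubTCA T (V T a0 g) where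
  one_mem := V_one_mem T a0 g
  perm_mem := fun n i π a ha => V_perm T a0 g π ha
  mul_mem := fun m n i j a b ha hb => V_mul T a0 g ha hb

end Defs

end TCAaux

namespace TCAaux
section Finiteness

variable {κ : Type*} {deg : κ → ℤ}

theorem degL_nonpos (hdeg : ∀ k, deg k < 0) (L : List κ) : degL (deg := deg) L ≤ 0 := by
  induction L with
  | nil => exact le_refl 0
  | cons k L ih => have := hdeg k; show deg k + degL (deg := deg) L ≤ 0; omega

theorem degL_le (hdeg : ∀ k, deg k < 0) (L : List κ) (k : κ) (hk : k ∈ L) :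
    degL (deg := deg) L ≤ deg k := by
  induction L with
  | nil => cases hk
  | cons k' L ih =>
    show deg k' + degL (deg := deg) L ≤ deg k
    rcases List.mem_cons.mp hk with h | h
    · subst h; have := degL_nonpos hdeg L; omega
    · have := ih h; have := hdeg k'; omega

theorem degL_le_neg_length (hdeg : ∀ k, deg k < 0) (L : List κ) :
    degL (deg := deg) L ≤ -(L.length : ℤ) := by
  induction L with
  | nil => simp [degL]
  | cons k L ih =>
    show deg k + degL (deg := deg) L ≤ -((L.length : ℤ) + 1)
    have := hdeg k; omega

theorem finite_lists (hdeg : ∀ k, deg k < 0) (hfin : ∀ N : ℤ, {k : κ | N ≤ deg k}.Finite)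
    (i : ℤ) : {L : List κ | degL (deg := deg) L = i}.Finite := by
  haveI : Finite ↥{k : κ | i ≤ deg k} := (hfin i).to_subtype
  apply Set.Finite.subset
    (Set.Finite.image (fun l : List ↥{k : κ | i ≤ deg k} => l.map Subtype.val)
      (List.finite_length_le ↥{k : κ | i ≤ deg k} (-i).toNat))
  intro L hL
  have hL' : degL (deg := deg) L = i := hL
  refine ⟨L.attach.map (fun x => ⟨x.1, ?_⟩), ?_, ?_⟩
  · show i ≤ deg x.1
    have := degL_le hdeg L x.1 x.2
    omega
  · show _ ≤ (-i).toNat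
    have h1 := degL_le_neg_length hdeg L
    simp only [List.length_map, List.length_attach]
    omega
  · simp

end Finiteness

end TCAaux

open TCAaux

/-- Let `A` be a twisted commutative algebra in `ℤ`-graded `R`-modules
with a generating set `{a_0} ∪ {g_k}` (i.e. the smallest sub-tca containing these
homogeneous elements is `A` itself) such that `a_0 ∈ A^0(1)`, `deg (g_k) < 0` for all
`k`, and for every `N` only finitely many generators have degree `≥ N`.  Then for each
`i : ℤ` the FI-module `n ↦ A^i(n)`, whose structure maps are given by the symmetric group
actions together with multiplication by `a_0`, is finitely generated: there is a finite
list of elements contained in no proper sub-FI-module (a sub-FI-module being a family of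
submodules `W n ≤ A^i(n)` closed under the symmetric group actions and under
multiplication by `a_0`). -/


theorem tca_finitely_generated_FI
    {R : Type*} [CommRing R] {A : ℕ → ℤ → Type*}
    [∀ n i, AddCommGroup (A n i)] [∀ n i, Module R (A n i)]
    (T : GradedTCA R A)
    (a0 : A 1 0)
    (κ : Type*) (ar : κ → ℕ) (deg : κ → ℤ) (g : ∀ k, A (ar k) (deg k))
    (hdeg : ∀ k, deg k < 0)
    (hfin : ∀ N : ℤ, {k : κ | N ≤ deg k}.Finite)
    (hgen : ∀ W : ∀ n i, Submodule R (A n i), IsSubTCA T W → a0 ∈ W 1 0 →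
      (∀ k, g k ∈ W (ar k) (deg k)) → ∀ n i, W n i = ⊤)
    (i : ℤ) :
    ∃ l : List (Σ n : ℕ, A n i),
      ∀ W : ∀ n : ℕ, Submodule R (A n i),
        (∀ (n : ℕ) (π : Equiv.Perm (Fin n)) (a : A n i), a ∈ W n → T.ρ n i π a ∈ W n) →
        (∀ (n : ℕ) (a : A n i), a ∈ W n →
          gcast rfl (add_zero i) (T.mul n 1 i 0 a a0) ∈ W (n + 1)) →
        (∀ e ∈ l, e.2 ∈ W e.1) →
        ∀ n : ℕ, W n = ⊤ := by
  classical
  have hLfin := finite_lists hdeg hfin i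
  refine ⟨(hLfin.toFinset.toList.attach).map
    (fun x => ⟨arL (ar := ar) x.1,
      gcast rfl (hLfin.mem_toFinset.mp (Finset.mem_toList.mp x.2)) (rprod T g x.1)⟩), ?_⟩
  intro W h1 h2 h3 n
  -- W is closed under a0pow
  have hWgcast : ∀ {m n' : ℕ} (h : m = n') (x : A m i), x ∈ W m → gcast h rfl x ∈ W n' := by
    intro m n' h x hx
    subst h
    rwa [gcast_rfl]
  have hWa0pow : ∀ (r : ℕ) {m : ℕ} (x : A m i), x ∈ W m → a0pow T a0 r x ∈ W (m + r) := by
    intro r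
    induction r with
    | zero => intro m x hx; exact hx
    | succ r ih =>
      intro m x hx
      exact h2 (m + r) (a0pow T a0 r x) (ih x hx)
  -- every normal-form generator of degree i lies in W
  have hGW : ∀ z ∈ Gens T a0 g n i, z ∈ W n := by
    rintro z ⟨L, r, π, h, h', rfl⟩
    have hbase : gcast rfl h' (rprod T g L) ∈ W (arL (ar := ar) L) :=
      h3 ⟨arL (ar := ar) L, gcast rfl h' (rprod T g L)⟩
        (List.mem_map.mpr ⟨⟨L, Finset.mem_toList.mpr (hLfin.mem_toFinset.mpr h')⟩,
          List.mem_attach _ _, rfl⟩)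
    rw [show gcast h h' (T.ρ _ _ π (a0pow T a0 r (rprod T g L))) =
        gcast h rfl (gcast rfl h' (T.ρ _ _ π (a0pow T a0 r (rprod T g L)))) from
      (gcast_gcast _ _ _ _ _).symm]
    rw [perm_gcast_deg, ← a0pow_gcast_deg]
    exact hWgcast h _ (h1 _ π _ (hWa0pow r _ hbase))
  -- V n i = ⊤, hence W n = ⊤
  have hV : V T a0 g n i = ⊤ :=
    hgen (V T a0 g) (V_isSubTCA T a0 g) (V_a0_mem T a0 g) (V_g_mem T a0 g) n i
  rw [eq_top_iff, ← hV]
  exact Submodule.span_le.mpr hGW
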